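/- Let p > 1, k ∈ ℕ, and 0 ≤ y < x ≤ 1 be such that u ↦ cos((kπ/2)·I_p(u)) is decreasing on [y,x]. Then ∫_y^x cos((kπ/2)·I_p(u)) du > (2/(kπ))·(x − y)·[sin((kπ/2)I_p(x)) − sin((kπ/2)I_p(y))]/[I_p(x) − I_p(y)]. -/

import Mathlib

open Real

noncomputable def pip (p : ℝ) : ℝ := 2 * π / (p * Real.sin (π / p))

noncomputable def Ip (p y : ℝ) : ℝ :=
  (2 / pip p) * ∫ t in (0:ℝ)..y, (1 - t ^ p) ^ (-1 / p)

open MeasureTheory intervalIntegral Set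

lemma aux_meas (p : ℝ) : Measurable (fun t : ℝ => (1 - t ^ p) ^ (-1 / p)) :=
  (measurable_const.sub (measurable_id.pow measurable_const)).pow measurable_const

lemma aux_integrable {p : ℝ} (hp : 1 < p) :
    IntervalIntegrable (fun t : ℝ => (1 - t ^ p) ^ (-1 / p)) volume 0 1 := by
  have hp0 : (0:ℝ) < p := lt_trans one_pos hp
  have hexp : (-1:ℝ) < -1 / p := by
    rw [neg_div, neg_lt_neg_iff]
    rw [div_lt_one hp0]; exact hp
  have hg : IntervalIntegrable (fun t : ℝ => (1 - t) ^ (-1 / p)) volume 0 1 := by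
    have := (intervalIntegrable_rpow' (a := 0) (b := 1) hexp).comp_sub_left 1
    simpa using this.symm
  refine hg.mono_fun' (aux_meas p).aestronglyMeasurable ?_
  rw [Filter.EventuallyLE, ae_restrict_iff' measurableSet_uIoc]
  refine Filter.Eventually.of_forall (fun t ht => ?_)
  rw [uIoc_of_le zero_le_one] at ht
  obtain ⟨ht0, ht1⟩ := ht
  have htp : t ^ p ≤ t := by
    have := Real.rpow_le_rpow_of_exponent_ge ht0 ht1 hp.le
    simpa using this
  have h1 : 0 ≤ 1 - t ^ p := by
    nlinarith [Real.rpow_le_one ht0.le ht1 hp0.le]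
  have h2 : (1 - t ^ p) ^ (-1 / p) ≤ (1 - t) ^ (-1 / p) := by
    rcases eq_or_lt_of_le ht1 with h | h
    · subst h
      have hne : -1 / p ≠ 0 := by
        rw [neg_div]; exact neg_ne_zero.mpr (by positivity)
      simp [Real.one_rpow, Real.zero_rpow hne]
    · exact Real.rpow_le_rpow_of_nonpos (by linarith) (by linarith)
        (by rw [neg_div]; exact neg_nonpos.mpr (by positivity))
  rw [Real.norm_eq_abs, abs_of_nonneg (Real.rpow_nonneg h1 _)]
  exact h2

lemma aux_C_pos {p : ℝ} (hp : 1 < p) : 0 < 2 / pip p := by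
  have hp0 : (0:ℝ) < p := lt_trans one_pos hp
  have hsin : 0 < Real.sin (π / p) :=
    Real.sin_pos_of_pos_of_lt_pi (by positivity) (div_lt_self pi_pos hp)
  have : 0 < pip p := by
    unfold pip
    positivity
  positivity

lemma aux_int_sub {p : ℝ} (hp : 1 < p) {a b : ℝ} (ha : 0 ≤ a) (ha1 : a ≤ 1)
    (hb : 0 ≤ b) (hb1 : b ≤ 1) :
    IntervalIntegrable (fun t : ℝ => (1 - t ^ p) ^ (-1 / p)) volume a b :=
  (aux_integrable hp).mono_set
    (uIcc_subset_uIcc (by rw [uIcc_of_le zero_le_one]; exact ⟨ha, ha1⟩)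
      (by rw [uIcc_of_le zero_le_one]; exact ⟨hb, hb1⟩))

lemma aux_fpos {p : ℝ} (hp : 1 < p) {t : ℝ} (ht0 : 0 ≤ t) (ht1 : t < 1) :
    0 < (1 - t ^ p) ^ (-1 / p) :=
  Real.rpow_pos_of_pos (by nlinarith [Real.rpow_lt_one ht0 ht1 (lt_trans one_pos hp)]) _

lemma aux_strictmono {p : ℝ} (hp : 1 < p) {a b : ℝ} (ha : 0 ≤ a) (hab : a < b)
    (hb1 : b ≤ 1) : Ip p a < Ip p b := by
  have key : Ip p b - Ip p a
      = (2 / pip p) * ∫ t in a..b, (1 - t ^ p) ^ (-1 / p) := by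
    unfold Ip
    rw [← mul_sub, integral_interval_sub_left (aux_int_sub hp le_rfl zero_le_one (le_trans ha hab.le) hb1) (aux_int_sub hp le_rfl zero_le_one ha (le_trans hab.le hb1))]
  have hpos : 0 < ∫ t in a..b, (1 - t ^ p) ^ (-1 / p) := by
    refine intervalIntegral_pos_of_pos_on
      (aux_int_sub hp ha (le_trans hab.le hb1) (le_trans ha hab.le) hb1)
      (fun t ht => aux_fpos hp (le_trans ha ht.1.le) (lt_of_lt_of_le ht.2 hb1)) hab
  nlinarith [aux_C_pos hp]

lemma aux_contOn {p : ℝ} (hp : 1 < p) : ContinuousOn (Ip p) (Icc 0 1) := by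
  unfold Ip
  refine continuousOn_const.mul ?_
  have := continuousOn_primitive_interval' (aux_integrable hp) left_mem_uIcc
  rwa [uIcc_of_le zero_le_one] at this

lemma aux_fcont {p : ℝ} (hp : 1 < p) :
    ContinuousOn (fun t : ℝ => (1 - t ^ p) ^ (-1 / p)) (Ioo 0 1) := by
  have hp0 : (0:ℝ) < p := lt_trans one_pos hp
  refine ContinuousOn.rpow_const ?_ (fun t ht => Or.inl ?_)
  · exact continuousOn_const.sub (continuousOn_id.rpow_const
      (fun t ht => Or.inl (ne_of_gt ht.1)))
  · have := Real.rpow_lt_one ht.1.le ht.2 hp0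
    intro h; nlinarith

lemma aux_hasDeriv {p : ℝ} (hp : 1 < p) {u : ℝ} (hu : u ∈ Ioo (0:ℝ) 1) :
    HasDerivAt (Ip p) ((2 / pip p) * (1 - u ^ p) ^ (-1 / p)) u := by
  have h1 : HasDerivAt (fun b => ∫ t in (0:ℝ)..b, (1 - t ^ p) ^ (-1 / p))
      ((1 - u ^ p) ^ (-1 / p)) u := by
    refine integral_hasDerivAt_right
      (aux_int_sub hp le_rfl zero_le_one hu.1.le hu.2.le)
      (aux_meas p).aestronglyMeasurable.stronglyMeasurableAtFilter
      ((aux_fcont hp).continuousAt (isOpen_Ioo.mem_nhds hu))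
  exact h1.const_mul _

lemma aux_convex {p : ℝ} (hp : 1 < p) {y x : ℝ} (hy : 0 ≤ y) (hyx : y < x)
    (hx : x ≤ 1) : StrictConvexOn ℝ (Icc y x) (Ip p) := by
  have hp0 : (0:ℝ) < p := lt_trans one_pos hp
  refine StrictMonoOn.strictConvexOn_of_deriv (convex_Icc y x)
    ((aux_contOn hp).mono (Icc_subset_Icc hy hx)) ?_
  rw [interior_Icc]
  intro a ha b hb hab
  have ha' : a ∈ Ioo (0:ℝ) 1 := ⟨lt_of_le_of_lt hy ha.1, lt_of_lt_of_le ha.2 hx⟩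
  have hb' : b ∈ Ioo (0:ℝ) 1 := ⟨lt_of_le_of_lt hy hb.1, lt_of_lt_of_le hb.2 hx⟩
  rw [(aux_hasDeriv hp ha').deriv, (aux_hasDeriv hp hb').deriv]
  have h1 : a ^ p < b ^ p := Real.rpow_lt_rpow ha'.1.le hab hp0
  have h2 : (0:ℝ) < 1 - b ^ p := by
    nlinarith [Real.rpow_lt_one hb'.1.le hb'.2 hp0]
  have h3 : (1 - a ^ p) ^ (-1 / p) < (1 - b ^ p) ^ (-1 / p) :=
    Real.rpow_lt_rpow_of_neg h2 (by linarith)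
      (by rw [neg_div]; exact neg_lt_zero.mpr (by positivity))
  exact mul_lt_mul_of_pos_left h3 (aux_C_pos hp)

lemma aux_cos_strict {c A B s t : ℝ} (hc : 0 < c)
    (hanti : AntitoneOn (fun τ => Real.cos (c * τ)) (Icc A B))
    (hAs : A ≤ s) (hst : s < t) (htB : t ≤ B) :
    Real.cos (c * t) < Real.cos (c * s) := by
  have hsm : s ∈ Icc A B := ⟨hAs, le_trans hst.le htB⟩
  have htm : t ∈ Icc A B := ⟨le_trans hAs hst.le, htB⟩
  rcases lt_or_eq_of_le (hanti hsm htm hst.le) with h | heq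
  · exact h
  exfalso
  have hconst : ∀ τ ∈ Icc s t, Real.cos (c * τ) = Real.cos (c * s) := by
    intro τ hτ
    have hτm : τ ∈ Icc A B := ⟨le_trans hAs hτ.1, le_trans hτ.2 htB⟩
    have h1 := hanti hsm hτm hτ.1
    have h2 := hanti hτm htm hτ.2
    simp only at h1 h2 ⊢
    linarith [heq]
  set d := min (t - s) (π / c) with hd
  have hd0 : 0 < d := lt_min (by linarith) (by positivity)
  have hdts : d ≤ t - s := min_le_left _ _
  have key : ∀ τ ∈ Ioo s t, Real.sin (c * τ) = 0 := by
    intro τ hτ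
    have hev : (fun τ => Real.cos (c * τ)) =ᶠ[nhds τ] fun _ => Real.cos (c * s) :=
      Filter.eventuallyEq_of_mem (isOpen_Ioo.mem_nhds hτ)
        (fun z hz => hconst z ⟨hz.1.le, hz.2.le⟩)
    have hder : HasDerivAt (fun τ => Real.cos (c * τ)) (-Real.sin (c * τ) * c) τ := by
      have hin : HasDerivAt (fun z : ℝ => c * z) c τ := by
        simpa using (hasDerivAt_id τ).const_mul c
      exact (Real.hasDerivAt_cos (c * τ)).comp τ hin
    have h0 : deriv (fun τ => Real.cos (c * τ)) τ = 0 := by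
      rw [hev.deriv_eq]; exact deriv_const τ _
    have h1 := hder.deriv
    rw [h0] at h1
    have := mul_eq_zero.mp h1.symm
    rcases this with h | h
    · linarith [neg_eq_zero.mp h]
    · exact absurd h (ne_of_gt hc)
  have h1 : s + d/3 ∈ Ioo s t := ⟨by linarith, by linarith⟩
  have h2 : s + d/2 ∈ Ioo s t := ⟨by linarith, by linarith⟩
  obtain ⟨n, hn⟩ := Real.sin_eq_zero_iff.mp (key _ h1)
  obtain ⟨m, hm⟩ := Real.sin_eq_zero_iff.mp (key _ h2)
  have hdiff : ((m : ℝ) - n) * π = c * (d/6) := by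
    have : c * (s + d/2) - c * (s + d/3) = c * (d/6) := by ring
    rw [← hm, ← hn] at this
    linarith [this]
  have hcd : c * (d/6) < π := by
    have hdc : d ≤ π / c := min_le_right _ _
    have : c * d ≤ c * (π / c) := mul_le_mul_of_nonneg_left hdc hc.le
    rw [mul_div_cancel₀ _ (ne_of_gt hc)] at this
    nlinarith [pi_pos]
  have hcd0 : 0 < c * (d/6) := by positivity
  have hgt : (0:ℝ) < (m : ℝ) - n := by nlinarith [pi_pos]
  have hlt1 : (m : ℝ) - n < 1 := by nlinarith [pi_pos]
  have hgt' : (0:ℤ) < m - n := by exact_mod_cast (by push_cast; linarith : ((0:ℤ):ℝ) < ((m - n : ℤ) : ℝ))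
  have hlt1' : (m - n : ℤ) < 1 := by exact_mod_cast (by push_cast; linarith : ((m - n : ℤ) : ℝ) < ((1:ℤ):ℝ))
  omega

theorem stmt_12 (p : ℝ) (hp : 1 < p) (k : ℕ) (hk : 1 ≤ k) (y x : ℝ)
    (hy : 0 ≤ y) (hyx : y < x) (hx : x ≤ 1)
    (hdec : AntitoneOn (fun u => Real.cos (k * π / 2 * Ip p u)) (Set.Icc y x)) :
    (∫ u in y..x, Real.cos (k * π / 2 * Ip p u)) >
      2 / (k * π) * (x - y) *
        ((Real.sin (k * π / 2 * Ip p x) - Real.sin (k * π / 2 * Ip p y)) /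
          (Ip p x - Ip p y)) := by
  have hk0 : (0:ℝ) < (k:ℝ) := by exact_mod_cast Nat.lt_of_lt_of_le Nat.zero_lt_one hk
  set c : ℝ := (k:ℝ) * π / 2 with hc
  have hcpos : 0 < c := by rw [hc]; positivity
  set A := Ip p y with hA
  set B := Ip p x with hB
  have hAB : A < B := aux_strictmono hp hy hyx hx
  have hxy0 : (0:ℝ) < x - y := by linarith
  have hIcont : ContinuousOn (Ip p) (Icc y x) := (aux_contOn hp).mono (Icc_subset_Icc hy hx)
  -- antitonicity of cos (c * ·) on [A, B]
  have hanti : AntitoneOn (fun τ => Real.cos (c * τ)) (Icc A B) := by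
    intro s hs t ht hst
    obtain ⟨u, hu, hus⟩ := intermediate_value_Icc hyx.le hIcont hs
    obtain ⟨v, hv, hvt⟩ := intermediate_value_Icc hyx.le hIcont ht
    have huv : u ≤ v := by
      by_contra hvu
      push_neg at hvu
      have := aux_strictmono hp (le_trans hy hv.1) hvu (le_trans hu.2 hx)
      rw [hus, hvt] at this
      exact absurd hst (not_le.mpr this)
    have h := hdec hu hv huv
    simp only at h ⊢
    rw [hus, hvt] at h
    exact h
  -- the chord
  set m : ℝ := (B - A) / (x - y) with hm
  have hm0 : 0 < m := div_pos (by linarith) hxy0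
  have hmxy : m * (x - y) = B - A := div_mul_cancel₀ _ (ne_of_gt hxy0)
  -- strict pointwise inequality on Ioo y x
  have hkey : ∀ u ∈ Ioo y x, Real.cos (c * (A + m * (u - y))) < Real.cos (c * Ip p u) := by
    intro u hu
    have hIu : Ip p u < A + m * (u - y) := by
      have hcvx := aux_convex hp hy hyx hx
      have hw1 : (0:ℝ) < (x - u) / (x - y) := div_pos (by linarith [hu.2]) hxy0
      have hw2 : (0:ℝ) < (u - y) / (x - y) := div_pos (by linarith [hu.1]) hxy0
      have hws : (x - u) / (x - y) + (u - y) / (x - y) = 1 := by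
        field_simp
        ring
      have h := hcvx.2 (left_mem_Icc.mpr hyx.le) (right_mem_Icc.mpr hyx.le)
        (ne_of_lt hyx) hw1 hw2 hws
      have e1 : ((x - u) / (x - y)) • y + ((u - y) / (x - y)) • x = u := by
        simp only [smul_eq_mul]
        field_simp
        ring
      have e2 : ((x - u) / (x - y)) • Ip p y + ((u - y) / (x - y)) • Ip p x
          = A + m * (u - y) := by
        simp only [smul_eq_mul, ← hA, ← hB, hm]
        field_simp
        ring
      rw [e1, e2] at h
      exact h
    have hAu : A ≤ Ip p u := (aux_strictmono hp hy hu.1 (le_trans hu.2.le hx)).le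
    have hLB : A + m * (u - y) ≤ B := by
      have : m * (u - y) ≤ m * (x - y) := mul_le_mul_of_nonneg_left (by linarith [hu.2]) hm0.le
      linarith [hmxy]
    exact aux_cos_strict hcpos hanti hAu hIu hLB
  -- integrability
  have hcont1 : ContinuousOn (fun u => Real.cos (c * Ip p u)) (Icc y x) :=
    Real.continuous_cos.comp_continuousOn (continuousOn_const.mul hIcont)
  have hint1 : IntervalIntegrable (fun u => Real.cos (c * Ip p u)) volume y x := by
    apply ContinuousOn.intervalIntegrable
    rwa [uIcc_of_le hyx.le]
  have hcont2 : Continuous fun u : ℝ => Real.cos (c * (A + m * (u - y))) := by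
    fun_prop
  have hint2 := hcont2.intervalIntegrable (μ := volume) y x
  have hposint : 0 < ∫ u in y..x,
      (Real.cos (c * Ip p u) - Real.cos (c * (A + m * (u - y)))) :=
    intervalIntegral_pos_of_pos_on (hint1.sub hint2)
      (fun u hu => sub_pos.mpr (hkey u hu)) hyx
  have hsplit : (∫ u in y..x, Real.cos (c * Ip p u))
      = (∫ u in y..x, (Real.cos (c * Ip p u) - Real.cos (c * (A + m * (u - y)))))
        + ∫ u in y..x, Real.cos (c * (A + m * (u - y))) := by
    rw [intervalIntegral.integral_sub hint1 hint2]
    ring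
  -- compute chord integral
  have hcm : c * m ≠ 0 := ne_of_gt (by positivity)
  have hcomp : (∫ u in y..x, Real.cos (c * (A + m * (u - y))))
      = (Real.sin (c * B) - Real.sin (c * A)) / (c * m) := by
    have hfeq : ∀ u : ℝ, c * (A + m * (u - y)) = (c * m) * u + (c * A - c * m * y) := by
      intro u; ring
    simp_rw [hfeq]
    rw [intervalIntegral.integral_comp_mul_add Real.cos hcm (c * A - c * m * y)]
    have e3 : c * m * x + (c * A - c * m * y) = c * B := by
      have : m * x - m * y = B - A := by rw [← hmxy]; ring
      nlinarith [this]
    have e4 : c * m * y + (c * A - c * m * y) = c * A := by ring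
    rw [e3, e4, integral_cos, smul_eq_mul]
    field_simp
  -- identify RHS
  have hRHS : 2 / ((k:ℝ) * π) * (x - y) * ((Real.sin (c * B) - Real.sin (c * A)) / (B - A))
      = (Real.sin (c * B) - Real.sin (c * A)) / (c * m) := by
    rw [hc, hm]
    have hπ : π ≠ 0 := ne_of_gt pi_pos
    have hBA : B - A ≠ 0 := ne_of_gt (by linarith)
    field_simp
  rw [hRHS]
  rw [← hcomp]
  linarith [hposint, hsplit]
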